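/- Let R > 0, let {E_h} be a sequence in 𝒰_R ⊆ ℝⁿ, and let E ⊆ ℝⁿ be a compact set such that E_h →K E in the sense of Kuratowski. Then E ∈ 𝒰_R and ∂E_h →K ∂E in the sense of Kuratowski. -/

import Mathlib

open Set Metric MeasureTheory Filter Topology ENNReal NNReal

noncomputable section

abbrev En (n : ℕ) := EuclideanSpace ℝ (Fin n)

def sphereCond (n : ℕ) (R : ℝ) (E : Set (En n)) : Prop :=
  ∀ p ∈ frontier E, ∃ p' p'' : En n, dist p p' = R ∧ dist p p'' = R ∧
    ball p' R ⊆ E ∧ ball p'' R ∩ E = ∅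

def UR (n : ℕ) (R : ℝ) : Set (Set (En n)) :=
  {E | IsClosed E ∧ Bornology.IsBounded E ∧ sphereCond n R E}

def KConv {X : Type*} [MetricSpace X] (F : ℕ → Set X) (F₀ : Set X) : Prop :=
  (∀ (p : X) (φ : ℕ → ℕ) (x : ℕ → X), StrictMono φ → (∀ k, x k ∈ F (φ k)) →
    Tendsto x atTop (𝓝 p) → p ∈ F₀) ∧
  (∀ p ∈ F₀, ∃ x : ℕ → X, (∀ h, x h ∈ F h) ∧ Tendsto x atTop (𝓝 p))

def L1Conv {n : ℕ} (F : ℕ → Set (En n)) (E : Set (En n)) : Prop :=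
  Tendsto (fun h => ∫ x, |(F h).indicator (fun _ => (1:ℝ)) x - E.indicator (fun _ => (1:ℝ)) x|)
    atTop (𝓝 0)

/-! ### Auxiliary lemmas -/

/-- A preconnected set meeting both `t` and its complement meets the frontier of `t`. -/
lemma seg_frontier {X : Type*} [TopologicalSpace X] {s t : Set X} (hs : IsPreconnected s)
    (h1 : (s ∩ t).Nonempty) (h2 : (s \ t).Nonempty) : (s ∩ frontier t).Nonempty := by
  by_contra hfr
  rw [Set.not_nonempty_iff_eq_empty] at hfr
  have hU : IsOpen (interior t) := isOpen_interior
  have hV : IsOpen (closure t)ᶜ := isClosed_closure.isOpen_compl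
  have hsub : s ⊆ interior t ∪ (closure t)ᶜ := by
    intro x hx
    have hxf : x ∉ frontier t := fun h => (Set.eq_empty_iff_forall_notMem.1 hfr x) ⟨hx, h⟩
    by_cases hxc : x ∈ closure t
    · left
      rcases (em (x ∈ interior t)) with h | h
      · exact h
      · exact absurd ⟨hxc, h⟩ hxf
    · right; exact hxc
  have h1' : (s ∩ interior t).Nonempty := by
    obtain ⟨x, hxs, hxt⟩ := h1
    refine ⟨x, hxs, ?_⟩
    have hxf : x ∉ frontier t := fun h => (Set.eq_empty_iff_forall_notMem.1 hfr x) ⟨hxs, h⟩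
    by_contra h
    exact hxf ⟨subset_closure hxt, h⟩
  have h2' : (s ∩ (closure t)ᶜ).Nonempty := by
    obtain ⟨x, hxs, hxt⟩ := h2
    refine ⟨x, hxs, ?_⟩
    have hxf : x ∉ frontier t := fun h => (Set.eq_empty_iff_forall_notMem.1 hfr x) ⟨hxs, h⟩
    intro hc
    exact hxf ⟨hc, fun hint => hxt (interior_subset hint)⟩
  obtain ⟨x, hxs, hxU, hxV⟩ := hs _ _ hU hV hsub h1' h2'
  exact hxV (subset_closure (interior_subset hxU))

/-- A point on a segment is at distance at most the max of the endpoint distances. -/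
lemma dist_seg {n : ℕ} {a b p y : En n} (hy : y ∈ segment ℝ a b) :
    dist y p ≤ max (dist a p) (dist b p) := by
  obtain ⟨u, v, hu, hv, huv, rfl⟩ := hy
  have : u • a + v • b - p = u • (a - p) + v • (b - p) := by
    have h1 : u • (a-p) + v • (b-p) = (u • a + v • b) - (u+v) • p := by
      rw [add_smul, smul_sub, smul_sub]; abel
    rw [h1, huv, one_smul]
  rw [dist_eq_norm, this, dist_eq_norm, dist_eq_norm]
  calc ‖u • (a - p) + v • (b - p)‖ ≤ u * ‖a - p‖ + v * ‖b - p‖ := by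
        refine (norm_add_le _ _).trans ?_
        rw [norm_smul, norm_smul, Real.norm_of_nonneg hu, Real.norm_of_nonneg hv]
    _ ≤ u * max ‖a - p‖ ‖b - p‖ + v * max ‖a - p‖ ‖b - p‖ := by
        gcongr
        exacts [le_max_left _ _, le_max_right _ _]
    _ = max ‖a - p‖ ‖b - p‖ := by rw [← add_mul, huv, one_mul]

variable {n : ℕ} {R : ℝ} {Eh : ℕ → Set (En n)} {E : Set (En n)}

/-- If `q ∉ E`, a whole ball around `q` eventually misses `Eh h`. -/
lemma aux_eventually_disjoint (hK : KConv Eh E) {q : En n} (hq : q ∉ E) :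
    ∃ δ > 0, ∀ᶠ h in atTop, ∀ z ∈ Eh h, z ∉ ball q δ := by
  by_contra hc
  push_neg at hc
  have h'' : ∀ m : ℕ, ∃ᶠ k in atTop, ∃ z, z ∈ Eh k ∧ z ∈ ball q (1 / (m + 1)) := by
    intro m
    have := hc (1 / (m + 1)) (by positivity)
    refine this.mono fun k hk => ?_
    obtain ⟨z, hz1, hz2⟩ := hk
    exact ⟨z, hz1, hz2⟩
  obtain ⟨φ, hφ, hP⟩ := extraction_forall_of_frequently h''
  choose z hz1 hz2 using hP
  have hzq : Tendsto z atTop (𝓝 q) := by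
    rw [tendsto_iff_dist_tendsto_zero]
    refine squeeze_zero (fun m => dist_nonneg) (fun m => (mem_ball.1 (hz2 m)).le) ?_
    exact tendsto_one_div_add_atTop_nhds_zero_nat
  exact hq (hK.1 q φ z hφ hz1 hzq)

/-- The limit of interior balls is an interior ball for `E`. -/
lemma aux_interior (hK : KConv Eh E) {φ : ℕ → ℕ} (hφ : StrictMono φ)
    {c : ℕ → En n} {a : En n} (hc : Tendsto c atTop (𝓝 a))
    (hball : ∀ k, ball (c k) R ⊆ Eh (φ k)) : ball a R ⊆ E := by
  intro x hx
  have hdx : Tendsto (fun k => dist x (c k)) atTop (𝓝 (dist x a)) :=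
    tendsto_const_nhds.dist hc
  have hev : ∀ᶠ k in atTop, dist x (c k) < R := hdx.eventually_lt_const (mem_ball.1 hx)
  obtain ⟨K, hK'⟩ := hev.exists_forall_of_atTop
  refine hK.1 x (fun k => φ (k + K)) (fun _ => x) ?_ ?_ tendsto_const_nhds
  · intro i j hij; exact hφ (by omega)
  · intro k; exact hball (k + K) (mem_ball.2 (hK' (k + K) (by omega)))

/-- The limit of exterior balls is an exterior ball for `E`. -/
lemma aux_exterior (hK : KConv Eh E) {φ : ℕ → ℕ} (hφ : StrictMono φ)
    {c : ℕ → En n} {b : En n} (hc : Tendsto c atTop (𝓝 b))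
    (hball : ∀ k, ball (c k) R ∩ Eh (φ k) = ∅) : ball b R ∩ E = ∅ := by
  rw [Set.eq_empty_iff_forall_notMem]
  rintro x ⟨hxb, hxE⟩
  obtain ⟨w, hw1, hw2⟩ := hK.2 x hxE
  have hd : Tendsto (fun k => dist (w (φ k)) (c k)) atTop (𝓝 (dist x b)) :=
    (hw2.comp hφ.tendsto_atTop).dist hc
  have hev : ∀ᶠ k in atTop, dist (w (φ k)) (c k) < R := hd.eventually_lt_const (mem_ball.1 hxb)
  obtain ⟨k, hk⟩ := hev.exists
  have : w (φ k) ∈ ball (c k) R ∩ Eh (φ k) := ⟨mem_ball.2 hk, hw1 (φ k)⟩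
  rw [hball k] at this
  exact this

/-- Points of the frontier of `E` are eventually approximated by frontier points of `Eh h`. -/
lemma aux_frontier_approx (hEh : ∀ h, IsClosed (Eh h)) (hK : KConv Eh E)
    (hEc : IsClosed E) {p : En n} (hp : p ∈ frontier E) :
    ∀ ε > 0, ∀ᶠ h in atTop, ∃ y ∈ frontier (Eh h), dist y p < ε := by
  intro ε hε
  have hpE : p ∈ E := hEc.closure_eq ▸ hp.1
  have hpc : p ∈ closure Eᶜ := by
    rw [closure_compl]; exact hp.2
  obtain ⟨q, hq, hqd⟩ := Metric.mem_closure_iff.1 hpc (ε / 2) (by positivity)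
  obtain ⟨δ, hδ, hev⟩ := aux_eventually_disjoint hK hq
  obtain ⟨x, hx1, hx2⟩ := hK.2 p hpE
  have hev2 : ∀ᶠ h in atTop, dist (x h) p < ε / 2 :=
    (tendsto_iff_dist_tendsto_zero.1 hx2).eventually_lt_const (by positivity)
  filter_upwards [hev, hev2] with h h1 h2
  have hqEh : q ∉ Eh h := fun hqh => h1 q hqh (mem_ball_self hδ)
  have hconn : IsPreconnected (segment ℝ (x h) q) := (convex_segment _ _).isPreconnected
  obtain ⟨y, hyseg, hyfr⟩ := seg_frontier hconn ⟨x h, left_mem_segment ℝ _ _, hx1 h⟩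
    ⟨q, right_mem_segment ℝ _ _, hqEh⟩
  refine ⟨y, hyfr, ?_⟩
  have hmax := dist_seg (p := p) hyseg
  have hqd' : dist q p < ε := by rw [dist_comm]; linarith
  calc dist y p ≤ max (dist (x h) p) (dist q p) := hmax
    _ < ε := max_lt (by linarith) hqd'

theorem kuratowski_limit_in_UR (n : ℕ) (hn : 2 ≤ n) (R : ℝ) (hR : 0 < R)
    (Eh : ℕ → Set (En n)) (hEh : ∀ h, Eh h ∈ UR n R)
    (E : Set (En n)) (hE : IsCompact E) (hK : KConv Eh E) :
    E ∈ UR n R ∧ KConv (fun h => frontier (Eh h)) (frontier E) := by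
  have hEcl : IsClosed E := hE.isClosed
  have hcl : ∀ h, IsClosed (Eh h) := fun h => (hEh h).1
  have happrox : ∀ p ∈ frontier E, ∀ ε > 0, ∀ᶠ h in atTop,
      ∃ y ∈ frontier (Eh h), dist y p < ε :=
    fun p hp => aux_frontier_approx hcl hK hEcl hp
  -- sphere condition for E
  have hsphere : sphereCond n R E := by
    intro p hp
    -- extract frontier points of `Eh (φ j)` converging to p
    have hPe : ∀ m : ℕ, ∀ᶠ k in atTop, ∃ y ∈ frontier (Eh k), dist y p < 1 / (m + 1) :=
      fun m => happrox p hp (1 / (m + 1)) (by positivity)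
    obtain ⟨φ, hφ, hP⟩ := extraction_forall_of_eventually hPe
    choose y hy1 hy2 using hP
    have hyp : Tendsto y atTop (𝓝 p) := by
      rw [tendsto_iff_dist_tendsto_zero]
      exact squeeze_zero (fun m => dist_nonneg) (fun m => (hy2 m).le)
        tendsto_one_div_add_atTop_nhds_zero_nat
    -- sphere conditions at y j
    choose c1 c2 hd1 hd2 hb1 hb2 using fun j => (hEh (φ j)).2.2 (y j) (hy1 j)
    have hbd : ∀ (c : ℕ → En n), (∀ j, dist (y j) (c j) = R) →
        ∀ j, c j ∈ closedBall p (R + 1) := by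
      intro c hdc j
      rw [mem_closedBall]
      calc dist (c j) p ≤ dist (c j) (y j) + dist (y j) p := dist_triangle _ _ _
        _ ≤ R + 1 := by
            rw [dist_comm, hdc j]
            have h1 : dist (y j) p < 1 / (j + 1 : ℝ) := hy2 j
            have h2 : 1 / (j + 1 : ℝ) ≤ 1 := by
              rw [div_le_one (by positivity)]; linarith [Nat.cast_nonneg (α := ℝ) j]
            linarith
    obtain ⟨a, -, ψ, hψ, hca⟩ := tendsto_subseq_of_bounded isBounded_closedBall
      (hbd c1 hd1)
    obtain ⟨b, -, ψ₂, hψ₂, hcb⟩ := tendsto_subseq_of_bounded isBounded_closedBall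
      (x := fun j => c2 (ψ j)) (fun j => hbd c2 hd2 (ψ j))
    set σ : ℕ → ℕ := fun k => φ (ψ (ψ₂ k)) with hσ
    have hσm : StrictMono σ := hφ.comp (hψ.comp hψ₂)
    have hca2 : Tendsto (fun k => c1 (ψ (ψ₂ k))) atTop (𝓝 a) := hca.comp hψ₂.tendsto_atTop
    have hcb2 : Tendsto (fun k => c2 (ψ (ψ₂ k))) atTop (𝓝 b) := hcb
    have hy3 : Tendsto (fun k => y (ψ (ψ₂ k))) atTop (𝓝 p) :=
      hyp.comp ((hψ.comp hψ₂).tendsto_atTop)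
    have hint : ball a R ⊆ E :=
      aux_interior hK hσm hca2 (fun k => hb1 (ψ (ψ₂ k)))
    have hext : ball b R ∩ E = ∅ :=
      aux_exterior hK hσm hcb2 (fun k => hb2 (ψ (ψ₂ k)))
    have hda : dist p a = R := by
      have h1 : Tendsto (fun k => dist (y (ψ (ψ₂ k))) (c1 (ψ (ψ₂ k)))) atTop
          (𝓝 (dist p a)) := hy3.dist hca2
      have h2 : (fun k => dist (y (ψ (ψ₂ k))) (c1 (ψ (ψ₂ k)))) = fun _ => R := by
        funext k; exact hd1 (ψ (ψ₂ k))
      rw [h2] at h1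
      exact (tendsto_nhds_unique h1 tendsto_const_nhds)
    have hdb : dist p b = R := by
      have h1 : Tendsto (fun k => dist (y (ψ (ψ₂ k))) (c2 (ψ (ψ₂ k)))) atTop
          (𝓝 (dist p b)) := hy3.dist hcb2
      have h2 : (fun k => dist (y (ψ (ψ₂ k))) (c2 (ψ (ψ₂ k)))) = fun _ => R := by
        funext k; exact hd2 (ψ (ψ₂ k))
      rw [h2] at h1
      exact (tendsto_nhds_unique h1 tendsto_const_nhds)
    exact ⟨a, b, hda, hdb, hint, hext⟩
  refine ⟨⟨hEcl, hE.isBounded, hsphere⟩, ?_, ?_⟩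
  · -- (i) for frontiers
    intro p φ x hφ hx hxp
    have hxEh : ∀ k, x k ∈ Eh (φ k) := by
      intro k
      have := frontier_subset_closure (hx k)
      rwa [(hcl (φ k)).closure_eq] at this
    have hpE : p ∈ E := hK.1 p φ x hφ hxEh hxp
    rw [hEcl.frontier_eq]
    refine ⟨hpE, ?_⟩
    intro hint
    obtain ⟨ε, hε, hball⟩ := Metric.mem_nhds_iff.1 (mem_interior_iff_mem_nhds.1 hint)
    -- exterior sphere centers at x k
    choose c1 c2 hd1 hd2 hb1 hb2 using fun k => (hEh (φ k)).2.2 (x k) (hx k)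
    obtain ⟨K0, hK0⟩ :=
      ((tendsto_iff_dist_tendsto_zero.1 hxp).eventually_lt_const one_pos).exists_forall_of_atTop
    have hmem : ∀ k, c2 (k + K0) ∈ closedBall p (R + 1) := by
      intro k
      rw [mem_closedBall]
      calc dist (c2 (k + K0)) p ≤ dist (c2 (k + K0)) (x (k + K0)) + dist (x (k + K0)) p :=
            dist_triangle _ _ _
        _ ≤ R + 1 := by
            rw [dist_comm, hd2 (k + K0)]
            have := hK0 (k + K0) (by omega)
            linarith
    obtain ⟨b, -, ψ, hψ, hcb⟩ := tendsto_subseq_of_bounded isBounded_closedBall hmem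
    set τ : ℕ → ℕ := fun k => ψ k + K0 with hτdef
    have hτ : StrictMono τ := fun i j hij => by have := hψ hij; simp only [hτdef]; omega
    have hσm : StrictMono (fun k => φ (τ k)) := hφ.comp hτ
    have hcb2 : Tendsto (fun k => c2 (τ k)) atTop (𝓝 b) := hcb
    have hext : ball b R ∩ E = ∅ := aux_exterior hK hσm hcb2 (fun k => hb2 (τ k))
    have hxτ : Tendsto (fun k => x (τ k)) atTop (𝓝 p) := hxp.comp hτ.tendsto_atTop
    have hdb : dist p b = R := by
      have h1 : Tendsto (fun k => dist (x (τ k)) (c2 (τ k))) atTop (𝓝 (dist p b)) :=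
        hxτ.dist hcb2
      have h2 : (fun k => dist (x (τ k)) (c2 (τ k))) = fun _ => R := by
        funext k; exact hd2 (τ k)
      rw [h2] at h1
      exact tendsto_nhds_unique h1 tendsto_const_nhds
    -- construct a point near p inside the exterior ball
    set t := min (ε / 2) (R / 2) with htdef
    have ht : 0 < t := lt_min (by positivity) (by positivity)
    have htR : t ≤ R / 2 := min_le_right _ _
    have htε : t ≤ ε / 2 := min_le_left _ _
    set w := p + (t / R) • (b - p) with hwdef
    have hbp : ‖b - p‖ = R := by rw [← dist_eq_norm, dist_comm]; exact hdb
    have hwp : dist w p = t := by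
      rw [hwdef, dist_eq_norm, add_sub_cancel_left, norm_smul, Real.norm_of_nonneg
        (by positivity), hbp, div_mul_cancel₀ _ hR.ne']
    have hwb : dist w b = R - t := by
      have hmod : p + (t / R) • (b - p) - b = (1 - t / R) • (p - b) := by
        rw [sub_smul, one_smul, smul_sub, smul_sub]; abel
      have hpb : ‖p - b‖ = R := by rw [← dist_eq_norm]; exact hdb
      have h1R : (0:ℝ) ≤ 1 - t / R := by
        have : t / R ≤ 1 := by
          rw [div_le_one hR]; linarith
        linarith
      rw [hwdef, dist_eq_norm, hmod, norm_smul, Real.norm_of_nonneg h1R, hpb,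
        sub_mul, one_mul, div_mul_cancel₀ _ hR.ne']
    have hwE : w ∈ E := hball (mem_ball.2 (by rw [hwp]; linarith))
    have hwb' : w ∈ ball b R := mem_ball.2 (by rw [hwb]; linarith)
    have : w ∈ ball b R ∩ E := ⟨hwb', hwE⟩
    rw [hext] at this
    exact this
  · -- (ii) for frontiers
    intro p hp
    have hpE : p ∈ E := hEcl.closure_eq ▸ hp.1
    obtain ⟨z, hz1, -⟩ := hK.2 p hpE
    haveI : Nonempty (Fin n) := ⟨⟨0, by omega⟩⟩
    have hfr_ne : ∀ h, (frontier (Eh h)).Nonempty := by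
      intro h
      rw [nonempty_frontier_iff]
      refine ⟨⟨z h, hz1 h⟩, ?_⟩
      intro huniv
      obtain ⟨r, hr⟩ := (isBounded_iff_subset_closedBall (0 : En n)).1 (hEh h).2.1
      obtain ⟨w, hw⟩ := NormedSpace.exists_lt_norm ℝ (En n) r
      have : w ∈ Eh h := huniv ▸ mem_univ w
      have := hr this
      rw [mem_closedBall, dist_zero_right] at this
      linarith
    choose y hy1 hy2 using fun h =>
      isClosed_frontier.exists_infDist_eq_dist (hfr_ne h) p
    refine ⟨y, hy1, ?_⟩
    rw [Metric.tendsto_nhds]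
    intro ε hε
    filter_upwards [happrox p hp ε hε] with h hh
    obtain ⟨w, hw1, hw2⟩ := hh
    have h1 : infDist p (frontier (Eh h)) ≤ dist p w := infDist_le_dist_of_mem hw1
    rw [hy2 h] at h1
    rw [dist_comm] at h1
    rw [dist_comm] at hw2
    exact lt_of_le_of_lt h1 hw2
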